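/- Let Λ = diag(λ₁,…,λₙ) with λ_i < 0 distinct, Ψ_{ij} = −1/(λ_i+λ_j), and s a sign vector supported on I' ⊆ {1,…,n}. If (β,γ) solves the coupled system diag(γ)Ψdiag(γ)β = μΛ²β, diag(β)Ψdiag(β)γ = μΛ²γ with common support I', normalization β᷀Λ²β = γ᷀Λ²γ = 1, and γ = s*β (Hadamard product), then the entrywise square β*β restricted to I' is proportional to the solution x of (diag(s)Ψdiag(s)) x = (s_id * λ * λ) restricted to I', where s_id is the indicator vector of I' and λ = (λ₁,…,λₙ). In particular, for fixed I' and s there is at most one such (β*β). -/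

import Mathlib

open Matrix MeasureTheory Set Real Filter

lemma int_exp_Ioi {c : ℝ} (hc : c < 0) :
    IntegrableOn (fun t : ℝ => Real.exp (c * t)) (Ioi 0) ∧
    ∫ t in Ioi (0:ℝ), Real.exp (c * t) = -1 / c := by
  have hb : 0 < -c := by linarith
  have hint : IntegrableOn (fun t : ℝ => Real.exp (c * t)) (Ioi 0) := by
    have := exp_neg_integrableOn_Ioi 0 hb
    simpa [neg_neg] using this
  refine ⟨hint, ?_⟩
  have := integral_Ioi_of_hasDerivAt_of_tendsto' (f := fun t : ℝ => Real.exp (c * t) / c)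
    (f' := fun t : ℝ => Real.exp (c * t)) (a := 0) (m := 0)
    (fun x _ => by
      have h1 : HasDerivAt (fun t : ℝ => c * t) c x := by
        simpa using (hasDerivAt_id x).const_mul c
      have := (h1.exp).div_const c
      simpa [mul_comm, mul_div_assoc, mul_div_cancel_left₀ _ (ne_of_lt hc)] using this)
    hint ?_
  · rw [this]; simp [div_eq_mul_inv, neg_div]
  · have : Tendsto (fun t : ℝ => Real.exp (c * t)) atTop (nhds 0) := by
      have := Real.tendsto_exp_atBot
      apply this.comp
      exact Tendsto.const_mul_atTop_of_neg hc tendsto_id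
    simpa [div_eq_mul_inv] using this.mul_const c⁻¹

lemma psi_pos {n : ℕ} {l : Fin n → ℝ} (hneg : ∀ i, l i < 0) (hinj : Function.Injective l)
    {w : Fin n → ℝ} (hw : w ≠ 0) :
    0 < ∑ i, ∑ j, w i * w j * (-1 / (l i + l j)) := by
  set f : ℝ → ℝ := fun t => ∑ i, w i * Real.exp (l i * t) with hf
  have hcij : ∀ i j : Fin n, l i + l j < 0 := fun i j => by have := hneg i; have := hneg j; linarith
  -- each product term integrable with known integral
  have hterm : ∀ i j : Fin n,
      IntegrableOn (fun t : ℝ => (w i * Real.exp (l i * t)) * (w j * Real.exp (l j * t))) (Ioi 0) ∧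
      ∫ t in Ioi (0:ℝ), (w i * Real.exp (l i * t)) * (w j * Real.exp (l j * t))
        = w i * w j * (-1 / (l i + l j)) := by
    intro i j
    have heq : (fun t : ℝ => (w i * Real.exp (l i * t)) * (w j * Real.exp (l j * t)))
        = fun t : ℝ => (w i * w j) * Real.exp ((l i + l j) * t) := by
      funext t
      have : (l i + l j) * t = l i * t + (l j * t) := by ring
      rw [this, Real.exp_add]; ring
    obtain ⟨h1, h2⟩ := int_exp_Ioi (hcij i j)
    constructor
    · rw [heq]; exact (h1.const_mul _)
    · rw [heq, MeasureTheory.integral_const_mul, h2]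
  -- f^2 expansion
  have hsq : ∀ t : ℝ, f t * f t = ∑ i, ∑ j, (w i * Real.exp (l i * t)) * (w j * Real.exp (l j * t)) := by
    intro t; rw [hf]; rw [Finset.sum_mul_sum]
  have hint2 : ∀ i : Fin n, IntegrableOn
      (fun t : ℝ => ∑ j, (w i * Real.exp (l i * t)) * (w j * Real.exp (l j * t))) (Ioi 0) :=
    fun i => MeasureTheory.integrable_finset_sum _ (fun j _ => (hterm i j).1)
  have hintf : IntegrableOn (fun t : ℝ => f t * f t) (Ioi 0) := by
    have : IntegrableOn (fun t : ℝ => ∑ i, ∑ j,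
        (w i * Real.exp (l i * t)) * (w j * Real.exp (l j * t))) (Ioi 0) :=
      MeasureTheory.integrable_finset_sum _ (fun i _ => hint2 i)
    exact this.congr_fun (fun t _ => (hsq t).symm) measurableSet_Ioi
  have hval : ∫ t in Ioi (0:ℝ), f t * f t = ∑ i, ∑ j, w i * w j * (-1 / (l i + l j)) := by
    calc ∫ t in Ioi (0:ℝ), f t * f t
        = ∫ t in Ioi (0:ℝ), ∑ i, ∑ j, (w i * Real.exp (l i * t)) * (w j * Real.exp (l j * t)) :=
          integral_congr_ae (Filter.Eventually.of_forall fun t => hsq t)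
      _ = ∑ i, ∫ t in Ioi (0:ℝ), ∑ j, (w i * Real.exp (l i * t)) * (w j * Real.exp (l j * t)) :=
          integral_finset_sum _ (fun i _ => hint2 i)
      _ = ∑ i, ∑ j, ∫ t in Ioi (0:ℝ), (w i * Real.exp (l i * t)) * (w j * Real.exp (l j * t)) :=
          Finset.sum_congr rfl (fun i _ => integral_finset_sum _ (fun j _ => (hterm i j).1))
      _ = ∑ i, ∑ j, w i * w j * (-1 / (l i + l j)) :=
          Finset.sum_congr rfl (fun i _ => Finset.sum_congr rfl (fun j _ => (hterm i j).2))
  rw [← hval]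
  -- f is not identically 0 on Ioi 0
  have hne : ∃ t₀ ∈ Ioi (0:ℝ), f t₀ ≠ 0 := by
    by_contra h
    push_neg at h
    apply hw
    have hv : (fun j => w j * Real.exp (l j)) = 0 := by
      apply Matrix.eq_zero_of_forall_pow_sum_mul_pow_eq_zero
        (f := fun j => Real.exp (l j)) (Real.exp_injective.comp hinj)
      intro i
      have ht : ((i : ℕ) : ℝ) + 1 ∈ Ioi (0:ℝ) := mem_Ioi.mpr (by positivity)
      have := h _ ht
      rw [hf] at this
      rw [← this]
      apply Finset.sum_congr rfl
      intro j _
      rw [← Real.exp_nat_mul]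
      have h3 : l j * (((i:ℕ):ℝ) + 1) = (i:ℕ) * l j + l j := by ring
      rw [h3, Real.exp_add]; ring
    funext j
    have := congrFun hv j
    simp only [Pi.zero_apply, mul_eq_zero] at this
    rcases this with h' | h'
    · exact h'
    · exact absurd h' (Real.exp_ne_zero _)
  obtain ⟨t₀, ht₀, hft₀⟩ := hne
  have hcontf : Continuous f := by
    apply continuous_finset_sum
    intro i _
    exact continuous_const.mul (Real.continuous_exp.comp (continuous_const.mul continuous_id))
  rw [setIntegral_pos_iff_support_of_nonneg_ae]
  · -- positive measure of support ∩ Ioi 0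
    have hopen : IsOpen (Function.support (fun t => f t * f t) ∩ Ioi 0) := by
      apply IsOpen.inter _ isOpen_Ioi
      rw [Function.support_eq_preimage]
      exact (hcontf.mul hcontf).isOpen_preimage _ (isOpen_compl_singleton)
    apply hopen.measure_pos volume
    exact ⟨t₀, by simp [Function.support, mul_self_eq_zero, hft₀], ht₀⟩
  · exact Filter.Eventually.of_forall (fun t => mul_self_nonneg (f t))
  · exact hintf

lemma psi_ker {n : ℕ} {l : Fin n → ℝ} (hneg : ∀ i, l i < 0) (hinj : Function.Injective l)
    (I' : Finset (Fin n)) {w : Fin n → ℝ} (hsupp : ∀ i ∉ I', w i = 0)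
    (hker : ∀ i ∈ I', ∑ j, (-1 / (l i + l j)) * w j = 0) : w = 0 := by
  by_contra hw
  have hpos := psi_pos hneg hinj hw
  have hzero : ∑ i, ∑ j, w i * w j * (-1 / (l i + l j)) = 0 := by
    apply Finset.sum_eq_zero
    intro i _
    by_cases hi : i ∈ I'
    · have : ∑ j, w i * w j * (-1 / (l i + l j)) = w i * ∑ j, (-1 / (l i + l j)) * w j := by
        rw [Finset.mul_sum]; apply Finset.sum_congr rfl; intro j _; ring
      rw [this, hker i hi, mul_zero]
    · apply Finset.sum_eq_zero; intro j _; rw [hsupp i hi]; ring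
  rw [hzero] at hpos; exact lt_irrefl 0 hpos

theorem squared_solution_proportional
    (n : ℕ) (l : Fin n → ℝ)
    (hneg : ∀ i, l i < 0) (hinj : Function.Injective l)
    (Ψ : Matrix (Fin n) (Fin n) ℝ) (hΨ : Ψ = Matrix.of fun i j => -1 / (l i + l j))
    (Λ : Matrix (Fin n) (Fin n) ℝ) (hΛ : Λ = Matrix.diagonal l)
    (I' : Finset (Fin n)) (hI' : I'.Nonempty)
    (s : Fin n → ℝ) (hs1 : ∀ i ∈ I', s i = 1 ∨ s i = -1) (hs0 : ∀ i ∉ I', s i = 0)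
    (β γ : Fin n → ℝ) (μ : ℝ)
    (hβsupp : ∀ i, β i ≠ 0 ↔ i ∈ I') (hγsupp : ∀ i, γ i ≠ 0 ↔ i ∈ I')
    (h1 : (diagonal γ * Ψ * diagonal γ) *ᵥ β = μ • ((Λ * Λ) *ᵥ β))
    (h2 : (diagonal β * Ψ * diagonal β) *ᵥ γ = μ • ((Λ * Λ) *ᵥ γ))
    (hβn : β ⬝ᵥ (Λ * Λ) *ᵥ β = 1) (hγn : γ ⬝ᵥ (Λ * Λ) *ᵥ γ = 1)
    (hγs : γ = fun i => s i * β i) :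
    (∀ x : Fin n → ℝ, (∀ i ∉ I', x i = 0) →
        (∀ i ∈ I', ((diagonal s * Ψ * diagonal s) *ᵥ x) i = (l i) ^ 2) →
        ∃ t : ℝ, ∀ i, (β i) ^ 2 = t * x i) ∧
      ∀ β' γ' : Fin n → ℝ, ∀ μ' : ℝ,
        (∀ i, β' i ≠ 0 ↔ i ∈ I') → (∀ i, γ' i ≠ 0 ↔ i ∈ I') →
        (diagonal γ' * Ψ * diagonal γ') *ᵥ β' = μ' • ((Λ * Λ) *ᵥ β') →
        (diagonal β' * Ψ * diagonal β') *ᵥ γ' = μ' • ((Λ * Λ) *ᵥ γ') →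
        β' ⬝ᵥ (Λ * Λ) *ᵥ β' = 1 → γ' ⬝ᵥ (Λ * Λ) *ᵥ γ' = 1 →
        γ' = (fun i => s i * β' i) →
        ∀ i, (β' i) ^ 2 = (β i) ^ 2 := by
  subst hγs
  have hΨe : ∀ i j, Ψ i j = -1 / (l i + l j) := fun i j => by rw [hΨ]; rfl
  have hs2 : ∀ i ∈ I', s i * s i = 1 := by
    intro i hi; rcases hs1 i hi with h | h <;> rw [h] <;> norm_num
  have hsne : ∀ i ∈ I', s i ≠ 0 := by
    intro i hi; rcases hs1 i hi with h | h <;> rw [h] <;> norm_num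
  -- entrywise formulas
  have hM : ∀ (a u : Fin n → ℝ) (i : Fin n),
      ((diagonal a * Ψ * diagonal a) *ᵥ u) i = a i * ∑ j, Ψ i j * (a j * u j) := by
    intro a u i
    rw [← Matrix.mulVec_mulVec, ← Matrix.mulVec_mulVec, Matrix.mulVec_diagonal]
    congr 1
    simp only [Matrix.mulVec, dotProduct, Matrix.diagonal_apply, ite_mul, zero_mul,
      Finset.sum_ite_eq, Finset.mem_univ, if_true]
  have hΛΛ : ∀ (u : Fin n → ℝ) (i : Fin n), ((Λ * Λ) *ᵥ u) i = l i ^ 2 * u i := by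
    intro u i
    subst hΛ
    simp [Matrix.diagonal_mul_diagonal, Matrix.mulVec_diagonal, sq]
  have hnorm : ∀ u : Fin n → ℝ, u ⬝ᵥ (Λ * Λ) *ᵥ u = ∑ i, l i ^ 2 * u i ^ 2 := by
    intro u
    simp only [dotProduct]
    apply Finset.sum_congr rfl
    intro i _
    rw [hΛΛ]; ring
  -- kernel fact
  have hcore : ∀ v : Fin n → ℝ, (∀ i ∉ I', v i = 0) →
      (∀ i ∈ I', ((diagonal s * Ψ * diagonal s) *ᵥ v) i = 0) → v = 0 := by
    intro v hv0 hveq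
    have hw0 : ∀ i ∉ I', s i * v i = 0 := fun i hi => by rw [hv0 i hi]; ring
    have hker : ∀ i ∈ I', ∑ j, (-1 / (l i + l j)) * (s j * v j) = 0 := by
      intro i hi
      have h := hveq i hi
      rw [hM] at h
      have hsum : ∑ j, (-1 / (l i + l j)) * (s j * v j) = ∑ j, Ψ i j * (s j * v j) :=
        Finset.sum_congr rfl fun j _ => by rw [hΨe]
      rw [hsum]
      exact (mul_eq_zero.mp h).resolve_left (hsne i hi)
    have hwz := psi_ker hneg hinj I' hw0 hker
    funext i
    by_cases hi : i ∈ I'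
    · have : s i * v i = 0 := congrFun hwz i
      have h2 := hs2 i hi
      have : s i * (s i * v i) = 0 := by rw [this]; ring
      rw [← mul_assoc, h2, one_mul] at this
      exact this
    · exact hv0 i hi
  -- derivation A, generic
  have hA : ∀ (β₀ : Fin n → ℝ) (μ₀ : ℝ), (∀ i, β₀ i ≠ 0 ↔ i ∈ I') →
      ((diagonal (fun i => s i * β₀ i) * Ψ * diagonal (fun i => s i * β₀ i)) *ᵥ β₀
        = μ₀ • ((Λ * Λ) *ᵥ β₀)) →
      ∀ i ∈ I', ((diagonal s * Ψ * diagonal s) *ᵥ (fun j => β₀ j ^ 2)) i = μ₀ * l i ^ 2 := by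
    intro β₀ μ₀ hsupp heq i hi
    have h := congrFun heq i
    rw [hM] at h
    simp only [Pi.smul_apply, smul_eq_mul] at h
    rw [hΛΛ] at h
    have hb : β₀ i ≠ 0 := (hsupp i).mpr hi
    rw [hM]
    have hsum : (∑ j, Ψ i j * (s j * β₀ j * β₀ j)) = ∑ j, Ψ i j * (s j * β₀ j ^ 2) :=
      Finset.sum_congr rfl fun j _ => by ring
    rw [hsum] at h
    apply mul_left_cancel₀ hb
    linear_combination h
  have hAβ := hA β μ hβsupp h1
  constructor
  · -- part 1
    intro x hx0 hxeq
    refine ⟨μ, ?_⟩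
    have hveq : (fun i => β i ^ 2 - μ * x i) = 0 := by
      apply hcore
      · intro i hi
        have hb : β i = 0 := by
          by_contra hb; exact hi ((hβsupp i).mp hb)
        rw [hb, hx0 i hi]; ring
      · intro i hi
        have hlin : ((diagonal s * Ψ * diagonal s) *ᵥ (fun i => β i ^ 2 - μ * x i)) i
            = ((diagonal s * Ψ * diagonal s) *ᵥ (fun j => β j ^ 2)) i
              - μ * ((diagonal s * Ψ * diagonal s) *ᵥ x) i := by
          rw [hM, hM, hM]
          simp only [Finset.mul_sum, ← Finset.sum_sub_distrib]
          apply Finset.sum_congr rfl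
          intro j _; ring
        rw [hlin, hAβ i hi, hxeq i hi]; ring
    intro i
    have := congrFun hveq i
    simp only [Pi.zero_apply] at this
    linarith
  · -- part 2
    intro β' γ' μ' hβ's hγ's h1' h2' hβn' hγn' hγ'eq
    subst hγ'eq
    have hA' := hA β' μ' hβ's h1'
    -- μ' • β² = μ • β'²
    have hveq : (fun i => μ' * β i ^ 2 - μ * β' i ^ 2) = 0 := by
      apply hcore
      · intro i hi
        have hb : β i = 0 := by by_contra hb; exact hi ((hβsupp i).mp hb)
        have hb' : β' i = 0 := by by_contra hb; exact hi ((hβ's i).mp hb)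
        rw [hb, hb']; ring
      · intro i hi
        have hlin : ((diagonal s * Ψ * diagonal s) *ᵥ (fun i => μ' * β i ^ 2 - μ * β' i ^ 2)) i
            = μ' * ((diagonal s * Ψ * diagonal s) *ᵥ (fun j => β j ^ 2)) i
              - μ * ((diagonal s * Ψ * diagonal s) *ᵥ (fun j => β' j ^ 2)) i := by
          rw [hM, hM, hM]
          simp only [Finset.mul_sum, ← Finset.sum_sub_distrib]
          apply Finset.sum_congr rfl
          intro j _; ring
        rw [hlin, hAβ i hi, hA' i hi]; ring
    have hprop : ∀ i, μ' * β i ^ 2 = μ * β' i ^ 2 := by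
      intro i
      have := congrFun hveq i
      simp only [Pi.zero_apply] at this
      linarith
    have hβn2 : ∑ i, l i ^ 2 * β i ^ 2 = 1 := by rw [← hnorm]; exact hβn
    have hβn2' : ∑ i, l i ^ 2 * β' i ^ 2 = 1 := by rw [← hnorm]; exact hβn'
    have hμeq : μ' = μ := by
      have : ∑ i, l i ^ 2 * (μ' * β i ^ 2) = ∑ i, l i ^ 2 * (μ * β' i ^ 2) :=
        Finset.sum_congr rfl fun i _ => by rw [hprop]
      calc μ' = μ' * ∑ i, l i ^ 2 * β i ^ 2 := by rw [hβn2]; ring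
        _ = ∑ i, l i ^ 2 * (μ' * β i ^ 2) := by rw [Finset.mul_sum]; exact Finset.sum_congr rfl fun i _ => by ring
        _ = ∑ i, l i ^ 2 * (μ * β' i ^ 2) := this
        _ = μ * ∑ i, l i ^ 2 * β' i ^ 2 := by rw [Finset.mul_sum]; exact Finset.sum_congr rfl fun i _ => by ring
        _ = μ := by rw [hβn2']; ring
    -- μ > 0
    have hμpos : 0 < μ := by
      obtain ⟨i₀, hi₀⟩ := hI'
      have hwne : (fun i => s i * β i ^ 2) ≠ 0 := by
        intro h
        have := congrFun h i₀
        simp only [Pi.zero_apply, mul_eq_zero] at this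
        rcases this with h' | h'
        · exact hsne i₀ hi₀ h'
        · exact (hβsupp i₀).mpr hi₀ (pow_eq_zero_iff (by norm_num) |>.mp h')
      have hQ := psi_pos hneg hinj hwne
      have hdot : ∑ i, β i * (((diagonal (fun i => s i * β i) * Ψ * diagonal (fun i => s i * β i)) *ᵥ β) i)
          = ∑ i, β i * ((μ • ((Λ * Λ) *ᵥ β)) i) :=
        Finset.sum_congr rfl fun i _ => by rw [h1]
      have hrhs : ∑ i, β i * ((μ • ((Λ * Λ) *ᵥ β)) i) = μ := by
        calc ∑ i, β i * ((μ • ((Λ * Λ) *ᵥ β)) i)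
            = μ * ∑ i, l i ^ 2 * β i ^ 2 := by
              rw [Finset.mul_sum]
              apply Finset.sum_congr rfl
              intro i _
              simp only [Pi.smul_apply, smul_eq_mul]
              rw [hΛΛ]; ring
          _ = μ := by rw [hβn2]; ring
      have hlhs : ∑ i, β i * (((diagonal (fun i => s i * β i) * Ψ * diagonal (fun i => s i * β i)) *ᵥ β) i)
          = ∑ i, ∑ j, (s i * β i ^ 2) * (s j * β j ^ 2) * (-1 / (l i + l j)) := by
        apply Finset.sum_congr rfl
        intro i _
        rw [hM, Finset.mul_sum, Finset.mul_sum]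
        apply Finset.sum_congr rfl
        intro j _
        rw [hΨe]; ring
      rw [hlhs, hrhs] at hdot
      rw [hdot] at hQ
      exact hQ
    intro i
    have := hprop i
    rw [hμeq] at this
    have hμne : μ ≠ 0 := ne_of_gt hμpos
    field_simp at this
    linarith
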